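/- Let (L, (p_n), (i_n)) be an ambilimit of a chain with objects D(n), connecting morphisms q_n : D(n+1) ⟶ D(n), e_n : D(n) ⟶ D(n+1) satisfying q_n ∘ e_n = id. Then for all n, m, the composite p_m ∘ i_n : D(n) ⟶ D(m) equals e_{n,m} (the composite of the e's) if n ≤ m, and equals q_{n,m} (the composite of the q's) otherwise. -/
import Mathlib


open CategoryTheory

/-- Composite `e_{n,m} = e_{m-1} ∘ ⋯ ∘ e_n : D n ⟶ D m` for `n ≤ m`. -/
def eComp {C : Type*} [Category C] {D : ℕ → C} (e : ∀ n, D n ⟶ D (n + 1))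
    {n m : ℕ} (h : n ≤ m) : D n ⟶ D m :=
  Nat.leRecOn h (fun {k} (f : D n ⟶ D k) => f ≫ e k) (𝟙 (D n))

/-- Composite `q_{m,n} = q_n ∘ ⋯ ∘ q_{m-1} : D m ⟶ D n` for `n ≤ m`. -/
def qComp {C : Type*} [Category C] {D : ℕ → C} (q : ∀ n, D (n + 1) ⟶ D n)
    {n m : ℕ} (h : n ≤ m) : D m ⟶ D n :=
  Nat.leRecOn h (fun {k} (f : D k ⟶ D n) => q k ≫ f) (𝟙 (D n))

section Aux

variable {C : Type*} [Category C] {D : ℕ → C}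

lemma eComp_self (e : ∀ n, D n ⟶ D (n + 1)) {n : ℕ} (h : n ≤ n) :
    eComp e h = 𝟙 (D n) := Nat.leRecOn_self _

lemma eComp_succ (e : ∀ n, D n ⟶ D (n + 1)) {n m : ℕ} (h : n ≤ m) (h2 : n ≤ m + 1) :
    eComp e h2 = eComp e h ≫ e m := Nat.leRecOn_succ h _

lemma qComp_self (q : ∀ n, D (n + 1) ⟶ D n) {n : ℕ} (h : n ≤ n) :
    qComp q h = 𝟙 (D n) := Nat.leRecOn_self _

lemma qComp_succ (q : ∀ n, D (n + 1) ⟶ D n) {n m : ℕ} (h : n ≤ m) (h2 : n ≤ m + 1) :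
    qComp q h2 = q m ≫ qComp q h := Nat.leRecOn_succ h _

/-- peel `qComp` at the bottom. -/
lemma qComp_bot (q : ∀ n, D (n + 1) ⟶ D n) {m k : ℕ} (h : m + 1 ≤ k) (h2 : m ≤ k) :
    qComp q h2 = qComp q h ≫ q m := by
  induction k, h using Nat.le_induction with
  | base => rw [qComp_succ q (le_refl m), qComp_self, qComp_self,
      Category.comp_id, Category.id_comp]
  | succ k hk ih =>
      rw [qComp_succ q (Nat.le_of_succ_le hk), ih (Nat.le_of_succ_le hk),
        qComp_succ q hk (Nat.le_succ_of_le hk), Category.assoc]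

end Aux

/-- For an ambilimit `(L, p, i)` of a chain of split monics (`q_n ∘ e_n = id`),
the composite `p_m ∘ i_n` is `e_{n,m}` if `n ≤ m` and `q_{n,m}` otherwise. -/
theorem ambilimit_connecting_maps {C : Type*} [Category C]
    (D : ℕ → C) (q : ∀ n, D (n + 1) ⟶ D n) (e : ∀ n, D n ⟶ D (n + 1))
    (hsplit : ∀ n, e n ≫ q n = 𝟙 (D n))
    (L : C) (p : ∀ n, L ⟶ D n) (i : ∀ n, D n ⟶ L)
    (hcone : ∀ n, p n = p (n + 1) ≫ q n)
    (hcocone : ∀ n, i n = e n ≫ i (n + 1))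
    (hlim : ∀ (M : C) (c : ∀ n, M ⟶ D n), (∀ n, c n = c (n + 1) ≫ q n) →
      ∃! f : M ⟶ L, ∀ n, f ≫ p n = c n)
    (hcolim : ∀ (M : C) (c : ∀ n, D n ⟶ M), (∀ n, c n = e n ≫ c (n + 1)) →
      ∃! f : L ⟶ M, ∀ n, i n ≫ f = c n)
    (hnorm₁ : ∀ n, i n ≫ p n ≫ i n = i n)
    (hnorm₂ : ∀ n, p n ≫ i n ≫ p n = p n)
    (hindep : ∀ n m, (p m ≫ i m) ≫ (p n ≫ i n) = (p n ≫ i n) ≫ (p m ≫ i m)) :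
    (∀ n m (h : n ≤ m), i n ≫ p m = eComp e h) ∧
    (∀ n m (h : m < n), i n ≫ p m = qComp q (le_of_lt h)) := by
  -- iterated cocone identity
  have hi : ∀ n m (h : n ≤ m), i n = eComp e h ≫ i m := by
    intro n m h
    induction m, h using Nat.le_induction with
    | base => rw [eComp_self, Category.id_comp]
    | succ m hm ih =>
        rw [eComp_succ e hm, Category.assoc, ← hcocone m, ih]
  -- iterated cone identity
  have hp : ∀ n m (h : n ≤ m), p n = p m ≫ qComp q h := by
    intro n m h
    induction m, h using Nat.le_induction with
    | base => rw [qComp_self, Category.comp_id]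
    | succ m hm ih =>
        rw [qComp_succ q hm, ← Category.assoc, ← hcone m, ih]
  -- the expected cone from D k
  set dm : ∀ k m : ℕ, D k ⟶ D m := fun k m =>
    if h : k ≤ m then eComp e h else qComp q (le_of_not_ge h) with hdm
  have hdm_le : ∀ k m (h : k ≤ m), dm k m = eComp e h := by
    intro k m h; simp [hdm, h]
  have hdm_gt : ∀ k m (h : m ≤ k), ¬ k ≤ m → dm k m = qComp q h := by
    intro k m h h'; simp [hdm, h']
  have hdcone : ∀ k m, dm k m = dm k (m + 1) ≫ q m := by
    intro k m
    rcases le_or_gt k m with h | h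
    · rw [hdm_le k m h, hdm_le k (m+1) (h.trans (Nat.le_succ m)),
        eComp_succ e h, Category.assoc, hsplit m, Category.comp_id]
    · rcases Nat.lt_or_ge (m+1) k with h' | h'
      · rw [hdm_gt k m h.le (not_le_of_gt h), hdm_gt k (m+1) h'.le (not_le_of_gt h')]
        exact qComp_bot q h _
      · have hk : k = m + 1 := le_antisymm h' h
        subst hk
        rw [hdm_le (m+1) (m+1) (le_refl _), hdm_gt (m+1) m (Nat.le_succ m) (by omega),
          eComp_self, qComp_succ q (le_refl m), qComp_self, Category.comp_id,
          Category.id_comp]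
  -- the induced maps f k : D k ⟶ L
  have hex : ∀ k, ∃ f : D k ⟶ L, ∀ m, f ≫ p m = dm k m := by
    intro k
    obtain ⟨f, hf, -⟩ := hlim (D k) (dm k) (hdcone k)
    exact ⟨f, hf⟩
  choose f hf using hex
  -- (p n ≫ i n) ≫ p m = p m for m ≤ n
  have htp : ∀ m n (h : m ≤ n), (p n ≫ i n) ≫ p m = p m := by
    intro m n h
    rw [hp m n h, ← Category.assoc, Category.assoc (p n), hnorm₂ n]
  -- f k ≫ (p n ≫ i n) = i k for k ≤ n
  have hfi : ∀ k n (h : k ≤ n), f k ≫ (p n ≫ i n) = i k := by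
    intro k n h
    rw [← Category.assoc, hf k n, hdm_le k n h, ← hi k n h]
  -- the main computation
  have main : ∀ k m, i k ≫ p m = dm k m := by
    intro k m
    have h1 : k ≤ max k m := le_max_left k m
    have h2 : m ≤ max k m := le_max_right k m
    calc i k ≫ p m = (f k ≫ (p (max k m) ≫ i (max k m))) ≫ p m := by rw [hfi k _ h1]
      _ = f k ≫ ((p (max k m) ≫ i (max k m)) ≫ p m) := by simp [Category.assoc]
      _ = f k ≫ p m := by rw [htp m _ h2]
      _ = dm k m := hf k m
  constructor
  · intro n m h
    rw [main n m, hdm_le n m h]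
  · intro n m h
    rw [main n m, hdm_gt n m h.le (Nat.not_le_of_lt h)]
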